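/- arXiv:2603.26314 — 2 statements merged into one kernel-verified Lean document; each statement's English description precedes it below -/
import Mathlib

section
/- Claim of Prop. 3 core inequality: let q_j = 0, let a₁, a₂ ∈ ℝ² with ‖a₁‖, ‖a₂‖ > r and let q₁ = f(a₁), q₂ = f(a₂) be their spherical flips (so ‖q_i‖ = 2r − ‖a_i‖ < r). Then for every point p on the segment [q₁, q₂], the point a on segment [a₁, a₂] lying on the ray from 0 through p satisfies ‖p‖ + ‖a‖ ≤ 2r. -/
lemma key_scalar (r α β m₁ m₂ : ℝ) (hr : 0 < r) (hm₁ : 0 < m₁) (hm₂ : 0 < m₂)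
    (hα : 0 ≤ α) (hβ : 0 ≤ β) (hαβ : α + β = 1) :
    (α * ((2*r - m₁)/m₁) + β * ((2*r - m₂)/m₂) + 1) * (α*(2*r - m₁) + β*(2*r - m₂))
      ≤ 2*r*(α * ((2*r - m₁)/m₁) + β * ((2*r - m₂)/m₂)) := by
  rw [← sub_nonneg]
  have hβ' : β = 1 - α := by linarith
  subst hβ'
  have hid : 2*r*(α * ((2*r - m₁)/m₁) + (1-α) * ((2*r - m₂)/m₂)) -
      (α * ((2*r - m₁)/m₁) + (1-α) * ((2*r - m₂)/m₂) + 1) * (α*(2*r - m₁) + (1-α)*(2*r - m₂))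
      = α*(1-α)*(2*r)*(m₁ - m₂)^2/(m₁*m₂) := by
    field_simp
    ring
  rw [hid]
  positivity

noncomputable def sphericalFlip (r : ℝ) (q : EuclideanSpace ℝ (Fin 2)) :
    EuclideanSpace ℝ (Fin 2) := (2 * r / ‖q‖) • q - q

/-- core inequality of Prop. 3: for `p` on the chord `[q₁, q₂]`
of the flipped points and `a` the ray-corresponding point on `[a₁, a₂]`,
`‖p‖ + ‖a‖ ≤ 2r`. -/
theorem chord_flip_inequality (r : ℝ) (hr : 0 < r)
    (a₁ a₂ : EuclideanSpace ℝ (Fin 2))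
    (ha₁ : r < ‖a₁‖) (ha₂ : r < ‖a₂‖)
    (ha₁' : ‖a₁‖ < 2 * r) (ha₂' : ‖a₂‖ < 2 * r)
    (q₁ q₂ : EuclideanSpace ℝ (Fin 2))
    (hq₁ : q₁ = sphericalFlip r a₁) (hq₂ : q₂ = sphericalFlip r a₂)
    (hnc : ¬ Collinear ℝ ({0, q₁, q₂} : Set (EuclideanSpace ℝ (Fin 2))))
    (p a : EuclideanSpace ℝ (Fin 2))
    (hp : p ∈ segment ℝ q₁ q₂) (ha : a ∈ segment ℝ a₁ a₂)
    (t : ℝ) (ht : 0 < t) (hray : a = t • p) :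
    ‖p‖ + ‖a‖ ≤ 2 * r := by
  have hm₁ : (0:ℝ) < ‖a₁‖ := hr.trans ha₁
  have hm₂ : (0:ℝ) < ‖a₂‖ := hr.trans ha₂
  set c₁ : ℝ := 2 * r / ‖a₁‖ - 1 with hc₁def
  set c₂ : ℝ := 2 * r / ‖a₂‖ - 1 with hc₂def
  have hq₁' : q₁ = c₁ • a₁ := by
    rw [hq₁, sphericalFlip, hc₁def, sub_smul, one_smul]
  have hq₂' : q₂ = c₂ • a₂ := by
    rw [hq₂, sphericalFlip, hc₂def, sub_smul, one_smul]
  have hc₁pos : 0 < c₁ := sub_pos.mpr ((one_lt_div hm₁).mpr ha₁')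
  have hc₂pos : 0 < c₂ := sub_pos.mpr ((one_lt_div hm₂).mpr ha₂')
  have hc₁m : c₁ * ‖a₁‖ = 2*r - ‖a₁‖ := by
    rw [hc₁def]; field_simp
  have hc₂m : c₂ * ‖a₂‖ = 2*r - ‖a₂‖ := by
    rw [hc₂def]; field_simp
  have hnq₁ : ‖q₁‖ = 2*r - ‖a₁‖ := by
    rw [hq₁', norm_smul, Real.norm_eq_abs, abs_of_pos hc₁pos, hc₁m]
  have hnq₂ : ‖q₂‖ = 2*r - ‖a₂‖ := by
    rw [hq₂', norm_smul, Real.norm_eq_abs, abs_of_pos hc₂pos, hc₂m]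
  -- linear independence of a₁, a₂
  have hli : LinearIndependent ℝ ![a₁, a₂] := by
    rw [LinearIndependent.pair_iff]
    by_contra hdep
    push_neg at hdep
    obtain ⟨s, u, hsu, hne⟩ := hdep
    apply hnc
    have ha₁ne : a₁ ≠ 0 := by
      intro h; rw [h, norm_zero] at hm₁; exact lt_irrefl _ hm₁
    have hune : u ≠ 0 := by
      intro hu0
      rw [hu0, zero_smul, add_zero, smul_eq_zero] at hsu
      rcases hsu with hs | h
      · exact hne hs hu0
      · exact ha₁ne h
    have ha₂eq : a₂ = (-s/u) • a₁ := by
      have h7 : u • a₂ = (-s) • a₁ := by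
        rw [neg_smul]; exact eq_neg_of_add_eq_zero_right hsu
      have h8 := congrArg (fun x : EuclideanSpace ℝ (Fin 2) => (u⁻¹ : ℝ) • x) h7
      simp only [smul_smul, inv_mul_cancel₀ hune, one_smul] at h8
      rw [h8]
      congr 1
      ring
    rw [collinear_iff_of_mem (Set.mem_insert 0 {q₁, q₂})]
    refine ⟨a₁, ?_⟩
    intro q hq
    simp only [Set.mem_insert_iff, Set.mem_singleton_iff] at hq
    rcases hq with rfl | rfl | rfl
    · exact ⟨0, by simp⟩
    · exact ⟨c₁, by simp [hq₁']⟩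
    · refine ⟨c₂ * (-s/u), ?_⟩
      rw [hq₂', ha₂eq, smul_smul]
      simp
  -- segment decompositions
  obtain ⟨α, β, hα, hβ, hαβ, hpEq⟩ := hp
  obtain ⟨u, v, hu, hv, huv, haEq⟩ := ha
  have haEq2 : a = (t*(α*c₁)) • a₁ + (t*(β*c₂)) • a₂ := by
    rw [hray, ← hpEq, hq₁', hq₂']
    module
  have h0 : (u - t*(α*c₁)) • a₁ + (v - t*(β*c₂)) • a₂ = 0 := by
    have h6 : u • a₁ + v • a₂ = (t*(α*c₁)) • a₁ + (t*(β*c₂)) • a₂ := haEq.trans haEq2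
    rw [sub_smul, sub_smul,
      show u•a₁ - (t*(α*c₁))•a₁ + (v•a₂ - (t*(β*c₂))•a₂) =
        (u•a₁+v•a₂) - ((t*(α*c₁))•a₁ + (t*(β*c₂))•a₂) from by abel, h6, sub_self]
  obtain ⟨e1, e2⟩ := (LinearIndependent.pair_iff.mp hli) _ _ h0
  have hu' : u = t*(α*c₁) := by linarith [sub_eq_zero.mp (by linarith [e1] : u - t*(α*c₁) = 0)]
  have hv' : v = t*(β*c₂) := by linarith [sub_eq_zero.mp (by linarith [e2] : v - t*(β*c₂) = 0)]
  have htD : t*(α*c₁ + β*c₂) = 1 := by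
    rw [mul_add]; rw [hu', hv'] at huv; linarith
  -- norm bounds
  have hpnorm : ‖p‖ ≤ α*(2*r - ‖a₁‖) + β*(2*r - ‖a₂‖) := by
    rw [← hpEq]
    calc ‖α • q₁ + β • q₂‖ ≤ ‖α • q₁‖ + ‖β • q₂‖ := norm_add_le _ _
      _ = α*(2*r - ‖a₁‖) + β*(2*r - ‖a₂‖) := by
          rw [norm_smul, norm_smul, Real.norm_eq_abs, Real.norm_eq_abs,
            abs_of_nonneg hα, abs_of_nonneg hβ, hnq₁, hnq₂]
  have hanorm : ‖a‖ = t*‖p‖ := by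
    rw [hray, norm_smul, Real.norm_eq_abs, abs_of_pos ht]
  -- key inequality
  have hc₁eq : c₁ = (2*r - ‖a₁‖)/‖a₁‖ := by rw [hc₁def]; field_simp
  have hc₂eq : c₂ = (2*r - ‖a₂‖)/‖a₂‖ := by rw [hc₂def]; field_simp
  have hks := key_scalar r α β ‖a₁‖ ‖a₂‖ hr hm₁ hm₂ hα hβ hαβ
  rw [← hc₁eq, ← hc₂eq] at hks
  -- multiply by t
  have h3 : t*((α*c₁ + β*c₂ + 1)*(α*(2*r - ‖a₁‖) + β*(2*r - ‖a₂‖)))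
      = (1+t)*(α*(2*r - ‖a₁‖) + β*(2*r - ‖a₂‖)) := by
    linear_combination (α*(2*r - ‖a₁‖) + β*(2*r - ‖a₂‖)) * htD
  have h4 : t*(2*r*(α*c₁ + β*c₂)) = 2*r := by linear_combination 2*r*htD
  have h1 : (1+t)*(α*(2*r - ‖a₁‖) + β*(2*r - ‖a₂‖)) ≤ 2*r := by
    calc (1+t)*(α*(2*r - ‖a₁‖) + β*(2*r - ‖a₂‖))
        = t*((α*c₁ + β*c₂ + 1)*(α*(2*r - ‖a₁‖) + β*(2*r - ‖a₂‖))) := h3.symm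
      _ ≤ t*(2*r*(α*c₁ + β*c₂)) := mul_le_mul_of_nonneg_left hks ht.le
      _ = 2*r := h4
  have h5 : (1+t)*‖p‖ ≤ (1+t)*(α*(2*r - ‖a₁‖) + β*(2*r - ‖a₂‖)) :=
    mul_le_mul_of_nonneg_left hpnorm (by linarith)
  have h6 : ‖p‖ + t*‖p‖ = (1+t)*‖p‖ := by ring
  rw [hanorm]
  linarith [h5, h1, h6]
end

section
/- A star-convex region intersected with a triangle having the star center as a vertex, where the region's boundary within the triangle is the flipped image of a chord: the set W_j ∩ Δ(0, a_k, a_{k+1}) is convex, where W_j = {t·u : u unit vector in the cone of the triangle, 0 ≤ t < ρ(u)} and ρ(u) = 2r − s(u) with s(u) the distance from 0 to the segment [a_k, a_{k+1}] along direction u. -/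
lemma key_ineq (r t u c d na nb : ℝ) (ht : 0 ≤ t) (hu : 0 ≤ u) (htu : t + u = 1)
    (hc : 0 ≤ c) (hd : 0 ≤ d) (hna : 0 < na) (hnb : 0 < nb)
    (ha : (c+1)*na < 2*r) (hb : (d+1)*nb < 2*r) (he : 0 < t*c + u*d) :
    (t*c + u*d + 1) * (t*c*na + u*d*nb) < 2*r*(t*c + u*d) := by
  have hu1 : u = 1 - t := by linarith
  subst hu1
  have ht1 : t ≤ 1 := by linarith
  have hr : 0 < r := by nlinarith
  have hPa : 0 < 2*r - (c+1)*na := by linarith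
  have hPb : 0 < 2*r - (d+1)*nb := by linarith
  have hcd : (0:ℝ) < (c+1)*(d+1) := by positivity
  have h3 : 0 ≤ 2*r*(t*(1-t)*(c-d)^2) := by positivity
  have hid : 2*r*(t*c+(1-t)*d)*((c+1)*(d+1))
      - (t*c+(1-t)*d+1)*(t*c*na+(1-t)*d*nb)*((c+1)*(d+1))
      = ((t*c+(1-t)*d+1)*(d+1)*(t*c)) * (2*r - (c+1)*na)
      + ((t*c+(1-t)*d+1)*(c+1)*((1-t)*d)) * (2*r - (d+1)*nb)
      + 2*r*(t*(1-t)*(c-d)^2) := by ring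
  have hgoal2 : (t*c+(1-t)*d+1)*(t*c*na+(1-t)*d*nb)*((c+1)*(d+1))
      < 2*r*(t*c+(1-t)*d)*((c+1)*(d+1)) := by
    rcases lt_or_eq_of_le (mul_nonneg ht hc) with hμp | hμ0
    · have h1 : 0 < ((t*c+(1-t)*d+1)*(d+1)*(t*c)) * (2*r - (c+1)*na) := by
        apply mul_pos _ hPa; positivity
      have h2 : 0 ≤ ((t*c+(1-t)*d+1)*(c+1)*((1-t)*d)) * (2*r - (d+1)*nb) := by
        apply mul_nonneg _ hPb.le
        apply mul_nonneg (by positivity) (by nlinarith)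
      linarith
    · have hνp : 0 < (1-t)*d := by nlinarith
      have h1 : 0 ≤ ((t*c+(1-t)*d+1)*(d+1)*(t*c)) * (2*r - (c+1)*na) := by
        apply mul_nonneg _ hPa.le
        apply mul_nonneg (by positivity) (mul_nonneg ht hc)
      have h2 : 0 < ((t*c+(1-t)*d+1)*(c+1)*((1-t)*d)) * (2*r - (d+1)*nb) := by
        apply mul_pos _ hPb
        apply mul_pos (by positivity) hνp
      linarith
  exact lt_of_mul_lt_mul_right (by linarith) hcd.le


/-- Corollary 1: the part of the visible region inside the
triangle `Δ(0, a₁, a₂)`, bounded by the spherical flip of the chord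
`[a₁, a₂]`, is convex.  A direction hitting the chord at a point `a`
(at distance `s = ‖a‖ ∈ (r, 2r)`) extends to radius `ρ = 2r − s`; writing
points as `c • a` with `t = c‖a‖ < 2r − ‖a‖`, the region is as below. -/
theorem visibleRegion_triangle_convex (r : ℝ) (hr : 0 < r)
    (a₁ a₂ : EuclideanSpace ℝ (Fin 2))
    (hnc : ¬ Collinear ℝ ({0, a₁, a₂} : Set (EuclideanSpace ℝ (Fin 2))))
    (hseg : ∀ a ∈ segment ℝ a₁ a₂, r < ‖a‖ ∧ ‖a‖ < 2 * r) :
    Convex ℝ {x : EuclideanSpace ℝ (Fin 2) |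
      ∃ a ∈ segment ℝ a₁ a₂, ∃ c : ℝ,
        0 ≤ c ∧ c * ‖a‖ < 2 * r - ‖a‖ ∧ x = c • a} := by
  rintro x ⟨a, ha, c, hc0, hcr, rfl⟩ y ⟨b, hb, d, hd0, hdr, rfl⟩ t u ht hu htu
  set μ := t * c with hμdef
  set ν := u * d with hνdef
  have hμ : 0 ≤ μ := mul_nonneg ht hc0
  have hν : 0 ≤ ν := mul_nonneg hu hd0
  have hz : t • (c • a) + u • (d • b) = μ • a + ν • b := by
    rw [smul_smul, smul_smul]
  rcases eq_or_lt_of_le (by positivity : (0:ℝ) ≤ μ + ν) with he0 | he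
  · -- z = 0
    have hμ0 : μ = 0 := by linarith
    have hν0 : ν = 0 := by linarith
    refine ⟨a₁, left_mem_segment ℝ a₁ a₂, 0, le_refl 0, ?_, ?_⟩
    · have := (hseg a₁ (left_mem_segment ℝ a₁ a₂)).2
      simp only [zero_mul]
      linarith
    · rw [hz, hμ0, hν0]; simp
  · set e := μ + ν with hedef
    set p := (μ / e) • a + (ν / e) • b with hpdef
    have hene : e ≠ 0 := ne_of_gt he
    have hp : p ∈ segment ℝ a₁ a₂ := by
      apply (convex_segment a₁ a₂) ha hb (by positivity) (by positivity)
      field_simp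
      exact hedef.symm
    have hna := hseg a ha
    have hnb := hseg b hb
    have hzp : t • (c • a) + u • (d • b) = e • p := by
      rw [hz, hpdef, smul_add, smul_smul, smul_smul,
        mul_div_cancel₀ μ hene, mul_div_cancel₀ ν hene]
    have hpnorm : ‖p‖ ≤ (μ/e) * ‖a‖ + (ν/e) * ‖b‖ := by
      calc ‖p‖ ≤ ‖(μ/e) • a‖ + ‖(ν/e) • b‖ := norm_add_le _ _
        _ = (μ/e) * ‖a‖ + (ν/e) * ‖b‖ := by
            rw [norm_smul, norm_smul, Real.norm_eq_abs, Real.norm_eq_abs,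
              abs_of_nonneg (by positivity), abs_of_nonneg (by positivity)]
    have hkey : (e + 1) * (μ * ‖a‖ + ν * ‖b‖) < 2 * r * e := by
      have := key_ineq r t u c d ‖a‖ ‖b‖ ht hu htu hc0 hd0
        (lt_trans hr hna.1) (lt_trans hr hnb.1)
        (by linarith [hcr]) (by linarith [hdr]) he
      calc (e + 1) * (μ * ‖a‖ + ν * ‖b‖)
          = (t*c + u*d + 1) * (t*c*‖a‖ + u*d*‖b‖) := by rw [hedef, hμdef, hνdef]
        _ < 2*r*(t*c + u*d) := this
        _ = 2 * r * e := by rw [hedef, hμdef, hνdef]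
    have hq : (e + 1) * ((μ/e) * ‖a‖ + (ν/e) * ‖b‖) < 2 * r := by
      rw [div_mul_eq_mul_div, div_mul_eq_mul_div, ← add_div,
        mul_div_assoc', div_lt_iff₀ he]
      linarith [hkey]
    refine ⟨p, hp, e, he.le, ?_, hzp⟩
    have : (e + 1) * ‖p‖ < 2 * r := by
      calc (e + 1) * ‖p‖ ≤ (e + 1) * ((μ/e) * ‖a‖ + (ν/e) * ‖b‖) := by
            apply mul_le_mul_of_nonneg_left hpnorm (by positivity)
        _ < 2 * r := hq
    linarith
end
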